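/- Let U be a nonempty totally disconnected compact Hausdorff space and σ : U → U a homeomorphism with σ ∘ σ = id. If σ has no fixed points, then there exists a clopen subset V ⊆ U such that U is the disjoint union of V and σ(V). -/

import Mathlib

lemma aux_greedy {U : Type*} [TopologicalSpace U] (σ : U ≃ₜ U)
    (hinv : ∀ x, σ (σ x) = x)
    (L : List (Set U)) (h : ∀ W ∈ L, IsClopen W ∧ Disjoint W (⇑σ '' W)) :
    ∃ V : Set U, IsClopen V ∧ Disjoint V (⇑σ '' V) ∧ ∀ W ∈ L, W ⊆ V ∪ ⇑σ '' V := by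
  have hmem : ∀ (A : Set U) (a : U), a ∈ ⇑σ '' A ↔ σ a ∈ A := by
    intro A a
    constructor
    · rintro ⟨b, hb, rfl⟩; rwa [hinv]
    · intro ha; exact ⟨σ a, ha, hinv a⟩
  have himgclopen : ∀ (A : Set U), IsClopen A → IsClopen (⇑σ '' A) := by
    intro A hA
    exact ⟨σ.isClosedMap A hA.1, σ.isOpenMap A hA.2⟩
  induction L with
  | nil => exact ⟨∅, isClopen_empty, by simp, by simp⟩
  | cons W L ih =>
    obtain ⟨V, hVc, hVd, hVcov⟩ := ih (fun W hW => h W (List.mem_cons_of_mem _ hW))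
    obtain ⟨hWc, hWd⟩ := h W List.mem_cons_self
    refine ⟨V ∪ (W \ (V ∪ ⇑σ '' V)), ?_, ?_, ?_⟩
    · exact hVc.union (hWc.diff (hVc.union (himgclopen V hVc)))
    · rw [Set.disjoint_left]
      rintro a (haV | ⟨haW, haN⟩) ha
      · rw [hmem] at ha
        rcases ha with hσV | ⟨hσW, hσN⟩
        · exact Set.disjoint_left.mp hVd haV ((hmem V a).mpr hσV)
        · exact hσN (Or.inr ((hmem V (σ a)).mpr (by rwa [hinv])))
      · rw [hmem] at ha
        rcases ha with hσV | ⟨hσW, hσN⟩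
        · exact haN (Or.inr ((hmem V a).mpr hσV))
        · exact Set.disjoint_left.mp hWd haW ((hmem W a).mpr hσW)
    · intro W' hW'
      rcases List.mem_cons.mp hW' with rfl | hW'
      · intro a haW
        by_cases haV : a ∈ V ∪ ⇑σ '' V
        · rcases haV with h1 | h1
          · exact Or.inl (Or.inl h1)
          · rw [hmem] at h1
            exact Or.inr ((hmem _ a).mpr (Or.inl h1))
        · exact Or.inl (Or.inr ⟨haW, haV⟩)
      · intro a haW
        rcases hVcov W' hW' haW with h1 | h1
        · exact Or.inl (Or.inl h1)
        · rw [hmem] at h1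
          exact Or.inr ((hmem _ a).mpr (Or.inl h1))

theorem stmt_0 {U : Type*} [TopologicalSpace U] [CompactSpace U] [T2Space U]
    [TotallyDisconnectedSpace U] [Nonempty U] (σ : U ≃ₜ U)
    (hinv : ∀ x, σ (σ x) = x) (hfix : ∀ x, σ x ≠ x) :
    ∃ V : Set U, IsClopen V ∧ Disjoint V (⇑σ '' V) ∧ V ∪ ⇑σ '' V = Set.univ := by
  have hmem : ∀ (A : Set U) (a : U), a ∈ ⇑σ '' A ↔ σ a ∈ A := by
    intro A a
    constructor
    · rintro ⟨b, hb, rfl⟩; rwa [hinv]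
    · intro ha; exact ⟨σ a, ha, hinv a⟩
  -- for each x, a clopen neighborhood disjoint from its image
  have hW : ∀ x : U, ∃ W : Set U, IsClopen W ∧ x ∈ W ∧ Disjoint W (⇑σ '' W) := by
    intro x
    obtain ⟨C, hC, hxC, hσxC⟩ := exists_isClopen_of_totally_separated (hfix x).symm
    refine ⟨C ∩ ⇑σ ⁻¹' Cᶜ, hC.inter (hC.compl.preimage σ.continuous), ⟨hxC, hσxC⟩, ?_⟩
    rw [Set.disjoint_left]
    rintro a ⟨haC, haP⟩ ha
    rw [hmem] at ha
    simp only [Set.mem_inter_iff, Set.mem_preimage, hinv, Set.mem_compl_iff] at ha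
    exact ha.2 haC
  choose W hWc hWx hWd using hW
  obtain ⟨t, ht⟩ := IsCompact.elim_finite_subcover isCompact_univ W
    (fun x => (hWc x).2) (fun x _ => Set.mem_iUnion.mpr ⟨x, hWx x⟩)
  obtain ⟨V, hVc, hVd, hVcov⟩ := aux_greedy σ hinv (t.toList.map W)
    (by
      intro W' hW'
      obtain ⟨x, _, rfl⟩ := List.mem_map.mp hW'
      exact ⟨hWc x, hWd x⟩)
  refine ⟨V, hVc, hVd, ?_⟩
  apply Set.eq_univ_of_univ_subset
  intro a ha
  obtain ⟨x, hx⟩ := Set.mem_iUnion.mp (ht ha)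
  simp only [Set.mem_iUnion, exists_prop] at hx
  exact hVcov (W x) (List.mem_map.mpr ⟨x, Finset.mem_toList.mpr hx.1, rfl⟩) hx.2
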